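/- arXiv:1104.2289 — 2 statements merged into one kernel-verified Lean document; each statement's English description precedes it below -/
import Mathlib

section
/- For every Hermitian matrix W on ℂ^{k₁}⊗⋯⊗ℂ^{k_m}: |tr W| ≤ sup{|tr[W (X₁⊗⋯⊗X_m)]| : X_j Hermitian matrices on ℂ^{k_j} with operator norm ‖X_j‖ = 1} ≤ ‖W‖_cov ≤ ‖W‖₁. -/
open scoped ComplexOrder Matrix

namespace LqHV

/-- Entrywise tensor (Kronecker) product of a finite family of square complex matrices,
realized on the pi-type index. -/
def tprod {ι : Type} [Fintype ι] [DecidableEq ι] {κ : ι → Type} [∀ i, Fintype (κ i)]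
    (X : ∀ i, Matrix (κ i) (κ i) ℂ) : Matrix (∀ i, κ i) (∀ i, κ i) ℂ :=
  fun a b => ∏ i, X i (a i) (b i)

/-- Elementary (product) vector `ψ₁ ⊗ ⋯ ⊗ ψ_m` of a family of vectors. -/
def tvec {ι : Type} [Fintype ι] [DecidableEq ι] {κ : ι → Type} (ψ : ∀ i, κ i → ℂ) :
    (∀ i, κ i) → ℂ :=
  fun a => ∏ i, ψ i (a i)

/-- A matrix `Z` on the tensor product space `ℂ^{k₁} ⊗ ⋯ ⊗ ℂ^{k_m}` is tensor positive if
`⟨ψ₁⊗⋯⊗ψ_m, Z (ψ₁⊗⋯⊗ψ_m)⟩ ≥ 0` for all vectors `ψ_j`. -/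
def TensorPos {ι : Type} [Fintype ι] [DecidableEq ι] {κ : ι → Type} [∀ i, Fintype (κ i)]
    (Z : Matrix (∀ i, κ i) (∀ i, κ i) ℂ) : Prop :=
  ∀ ψ : ∀ i, κ i → ℂ, 0 ≤ star (tvec ψ) ⬝ᵥ Z.mulVec (tvec ψ)

/-- `C` is a covering of `Z`: a tensor positive matrix such that `C + Z` and `C - Z` are both
tensor positive. -/
def IsCovering {ι : Type} [Fintype ι] [DecidableEq ι] {κ : ι → Type} [∀ i, Fintype (κ i)]
    (Z C : Matrix (∀ i, κ i) (∀ i, κ i) ℂ) : Prop :=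
  TensorPos C ∧ TensorPos (C + Z) ∧ TensorPos (C - Z)

/-- The covering norm `‖Z‖_cov = inf{tr C : C a covering of Z}`. -/
noncomputable def covNorm {ι : Type} [Fintype ι] [DecidableEq ι] {κ : ι → Type}
    [∀ i, Fintype (κ i)] (Z : Matrix (∀ i, κ i) (∀ i, κ i) ℂ) : ℝ :=
  sInf ((fun C => (Matrix.trace C).re) '' {C | IsCovering Z C})

/-- The absolute value `|W| := √(Wᴴ W)` of a matrix (`= √(W²)` for Hermitian `W`). -/
noncomputable def matAbs {n : Type} [Fintype n] [DecidableEq n]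
    (W : Matrix n n ℂ) : Matrix n n ℂ :=
  (Matrix.posSemidef_conjTranspose_mul_self W).1.eigenvectorUnitary.1 *
    Matrix.diagonal ((↑) ∘ (√·) ∘ (Matrix.posSemidef_conjTranspose_mul_self W).1.eigenvalues) *
    (star (Matrix.posSemidef_conjTranspose_mul_self W).1.eigenvectorUnitary : Matrix n n ℂ)

/-- The trace norm `‖W‖₁ := tr √(Wᴴ W)`. -/
noncomputable def traceNorm {n : Type} [Fintype n] [DecidableEq n]
    (W : Matrix n n ℂ) : ℝ :=
  ((matAbs W).trace).re

end LqHV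

namespace LqHV

/-- The (l²) operator norm of a matrix. -/
noncomputable def opNorm {n : Type} [Fintype n] [DecidableEq n] (X : Matrix n n ℂ) : ℝ :=
  ‖Matrix.toEuclideanCLM (𝕜 := ℂ) X‖

end LqHV

namespace LqHV

section Aux
variable {ι : Type} [Fintype ι] [DecidableEq ι] {κ : ι → Type} [∀ i, Fintype (κ i)]
  [∀ i, DecidableEq (κ i)]

set_option linter.unusedSectionVars false

lemma tprod_mul (X Y : ∀ i, Matrix (κ i) (κ i) ℂ) :
    tprod X * tprod Y = tprod (fun i => X i * Y i) := by
  ext a b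
  simp only [tprod, Matrix.mul_apply, ← Finset.prod_mul_distrib]
  rw [Finset.prod_univ_sum]
  rw [← Fintype.piFinset_univ]

lemma tprod_conjTranspose (X : ∀ i, Matrix (κ i) (κ i) ℂ) :
    (tprod X)ᴴ = tprod (fun i => (X i)ᴴ) := by
  ext a b
  simp [tprod, Matrix.conjTranspose_apply, map_prod]

lemma tprod_diagonal (d : ∀ i, κ i → ℂ) :
    tprod (fun i => Matrix.diagonal (d i)) = Matrix.diagonal (fun a => ∏ i, d i (a i)) := by
  ext a b
  by_cases h : a = b
  · subst h; simp [tprod, Matrix.diagonal_apply_eq]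
  · obtain ⟨i, hi⟩ := Function.ne_iff.mp h
    rw [Matrix.diagonal_apply_ne _ h]
    exact Finset.prod_eq_zero (Finset.mem_univ i) (Matrix.diagonal_apply_ne _ hi)

lemma tprod_one : tprod (fun i => (1 : Matrix (κ i) (κ i) ℂ)) = 1 := by
  have : (fun i => (1 : Matrix (κ i) (κ i) ℂ)) = fun i => Matrix.diagonal (fun _ => (1:ℂ)) := by
    simp [Matrix.diagonal_one]
  rw [this, tprod_diagonal]
  simp [Matrix.diagonal_one]

lemma tvec_single (a : ∀ i, κ i) :
    tvec (fun i => Pi.single (a i) (1:ℂ)) = Pi.single a 1 := by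
  funext b
  by_cases h : b = a
  · subst h; simp [tvec]
  · obtain ⟨i, hi⟩ := Function.ne_iff.mp h
    rw [Pi.single_apply, if_neg h]
    exact Finset.prod_eq_zero (Finset.mem_univ i) (by simp [Pi.single_apply, hi])

lemma diag_nonneg {C : Matrix (∀ i, κ i) (∀ i, κ i) ℂ} (hC : TensorPos C) (a : ∀ i, κ i) :
    0 ≤ C a a := by
  have := hC (fun i => Pi.single (a i) (1:ℂ))
  rw [tvec_single] at this
  simpa [Matrix.mulVec_single, dotProduct, Pi.single_apply, apply_ite] using this

lemma trace_re_nonneg {C : Matrix (∀ i, κ i) (∀ i, κ i) ℂ} (hC : TensorPos C) :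
    0 ≤ (Matrix.trace C).re := by
  have h : (0:ℂ) ≤ Matrix.trace C := Finset.sum_nonneg fun a _ => diag_nonneg hC a
  exact (Complex.le_def.mp h).1

lemma column_quad {n : Type} [Fintype n] [DecidableEq n] (Z U : Matrix n n ℂ) (a : n) :
    (Uᴴ * Z * U) a a = star (fun b => U b a) ⬝ᵥ Z.mulVec (fun b => U b a) := by
  simp only [Matrix.mul_apply, Matrix.mulVec, dotProduct, Matrix.conjTranspose_apply,
    Pi.star_apply, Finset.sum_mul, Finset.mul_sum]
  rw [Finset.sum_comm]
  apply Finset.sum_congr rfl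
  intro b _
  apply Finset.sum_congr rfl
  intro c _
  ring

lemma quad_bound {W C : Matrix (∀ i, κ i) (∀ i, κ i) ℂ} (hcov : IsCovering W C)
    (ψ : ∀ i, κ i → ℂ) :
    ‖star (tvec ψ) ⬝ᵥ W.mulVec (tvec ψ)‖ ≤
      (star (tvec ψ) ⬝ᵥ C.mulVec (tvec ψ)).re := by
  set v := tvec ψ
  set qw := star v ⬝ᵥ W.mulVec v with hqw
  set qc := star v ⬝ᵥ C.mulVec v with hqc
  have h1 : (0:ℂ) ≤ qc + qw := by
    have := hcov.2.1 ψ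
    rwa [Matrix.add_mulVec, dotProduct_add] at this
  have h2 : (0:ℂ) ≤ qc - qw := by
    have := hcov.2.2 ψ
    rwa [Matrix.sub_mulVec, dotProduct_sub] at this
  rw [Complex.le_def] at h1 h2
  simp only [Complex.add_re, Complex.add_im, Complex.sub_re, Complex.sub_im,
    Complex.zero_re, Complex.zero_im] at h1 h2
  have him : qw.im = 0 := by linarith [h1.2, h2.2]
  have : qw = (qw.re : ℂ) := Complex.ext rfl (by simp [him])
  rw [this, Complex.norm_real, Real.norm_eq_abs]
  exact abs_le.mpr ⟨by linarith [h1.1], by linarith [h2.1]⟩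

lemma abs_eigenvalue_le {n : Type} [Fintype n] [DecidableEq n] {X : Matrix n n ℂ}
    (hX : X.IsHermitian) (j : n) : |hX.eigenvalues j| ≤ opNorm X := by
  set v : EuclideanSpace ℂ n := hX.eigenvectorBasis j with hv
  have hnv : ‖v‖ = 1 := hX.eigenvectorBasis.orthonormal.1 j
  have happ : Matrix.toEuclideanCLM (𝕜 := ℂ) X v =
      (WithLp.equiv _ _).symm (X.mulVec (WithLp.equiv _ _ v)) := by
    rfl
  have hmv : X.mulVec (WithLp.equiv _ _ v) = hX.eigenvalues j • (WithLp.equiv _ _ v) := by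
    simpa using hX.mulVec_eigenvectorBasis j
  have : ‖Matrix.toEuclideanCLM (𝕜 := ℂ) X v‖ = |hX.eigenvalues j| := by
    rw [happ, hmv]
    rw [show ((WithLp.equiv _ _).symm (hX.eigenvalues j • (WithLp.equiv _ _ v)) : EuclideanSpace ℂ n)
      = hX.eigenvalues j • v from by rfl]
    rw [norm_smul, hnv, mul_one, Real.norm_eq_abs]
  calc |hX.eigenvalues j| = ‖Matrix.toEuclideanCLM (𝕜 := ℂ) X v‖ := this.symm
    _ ≤ opNorm X * ‖v‖ := (Matrix.toEuclideanCLM (𝕜 := ℂ) X).le_opNorm v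
    _ = opNorm X := by rw [hnv, mul_one]

lemma opNorm_one {n : Type} [Fintype n] [DecidableEq n] [Nonempty n] :
    opNorm (1 : Matrix n n ℂ) = 1 := by
  have h : Matrix.toEuclideanCLM (𝕜 := ℂ) (1 : Matrix n n ℂ) = 1 := map_one _
  rw [opNorm, h]
  haveI : Nontrivial (EuclideanSpace ℂ n) := inferInstance
  exact norm_one

lemma conj_diag_psd {n : Type} [Fintype n] [DecidableEq n] (U : Matrix n n ℂ) {d : n → ℝ}
    (hd : ∀ a, 0 ≤ d a) :
    Matrix.PosSemidef (U * Matrix.diagonal (fun a => (d a : ℂ)) * star U) := by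
  have h : Matrix.PosSemidef (Matrix.diagonal (fun a => (d a : ℂ))) :=
    Matrix.PosSemidef.diagonal (fun a => by
      rw [Complex.le_def]; simp [hd a])
  simpa [Matrix.star_eq_conjTranspose] using h.mul_mul_conjTranspose_same U

lemma matAbs_spectral {n : Type} [Fintype n] [DecidableEq n] {W : Matrix n n ℂ}
    (hW : W.IsHermitian) :
    matAbs W = (hW.eigenvectorUnitary : Matrix n n ℂ) *
      Matrix.diagonal (fun a => ((|hW.eigenvalues a| : ℝ) : ℂ)) *
      star (hW.eigenvectorUnitary : Matrix n n ℂ) := by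
  set U := (hW.eigenvectorUnitary : Matrix n n ℂ) with hUdef
  have hU : star U * U = 1 := Matrix.mem_unitaryGroup_iff'.mp hW.eigenvectorUnitary.2
  have key : ∀ d : n → ℝ, (U * Matrix.diagonal (fun a => (d a : ℂ)) * star U) *
      (U * Matrix.diagonal (fun a => (d a : ℂ)) * star U)
      = U * Matrix.diagonal (fun a => ((d a * d a : ℝ) : ℂ)) * star U := by
    intro d
    calc (U * Matrix.diagonal _ * star U) * (U * Matrix.diagonal _ * star U)
        = U * (Matrix.diagonal (fun a => (d a : ℂ)) * (star U * U) *
          Matrix.diagonal (fun a => (d a : ℂ))) * star U := by noncomm_ring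
      _ = _ := by
          rw [hU, mul_one, Matrix.diagonal_mul_diagonal]
          push_cast
          rfl
  have hA := (Matrix.posSemidef_conjTranspose_mul_self W).1
  have e1 : matAbs W = cfc (fun x : ℝ => √x) (Wᴴ * W) := by
    rw [Matrix.IsHermitian.cfc_eq hA]
    simp only [matAbs, Matrix.IsHermitian.cfc, Unitary.conjStarAlgAut_apply]
    rfl
  have e2 : Wᴴ * W = cfc (fun x : ℝ => x ^ 2) W := by
    rw [cfc_pow_id W 2 hW.isSelfAdjoint, hW.eq, sq]
  have e3 : cfc (fun x : ℝ => √x) (Wᴴ * W) = cfc (fun x : ℝ => |x|) W := by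
    rw [e2, ← cfc_comp (fun x : ℝ => √x) (fun x : ℝ => x ^ 2) W hW.isSelfAdjoint]
    congr 1
    funext x
    simp [Function.comp, Real.sqrt_sq_eq_abs]
  rw [e1, e3, Matrix.IsHermitian.cfc_eq hW]
  simp only [Matrix.IsHermitian.cfc, Unitary.conjStarAlgAut_apply]
  rfl

lemma posSemidef_matAbs_add {n : Type} [Fintype n] [DecidableEq n] {W : Matrix n n ℂ}
    (hW : W.IsHermitian) : Matrix.PosSemidef (matAbs W + W) := by
  set U := (hW.eigenvectorUnitary : Matrix n n ℂ) with hUdef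
  have hrep : matAbs W + W =
      U * Matrix.diagonal (fun a => ((|hW.eigenvalues a| + hW.eigenvalues a : ℝ) : ℂ)) * star U := by
    have h2 : matAbs W + W =
        U * Matrix.diagonal (fun a => ((|hW.eigenvalues a| : ℝ) : ℂ)) * star U +
        U * Matrix.diagonal (RCLike.ofReal ∘ hW.eigenvalues) * star U :=
      congrArg₂ (· + ·) (matAbs_spectral hW) hW.spectral_theorem
    rw [h2, show ∀ (A B C D : Matrix n n ℂ), A * B * C + A * D * C = A * (B + D) * C from
      fun A B C D => by noncomm_ring, Matrix.diagonal_add]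
    congr 2
    funext a
    simp [Function.comp]
  rw [hrep]
  exact conj_diag_psd U (fun a => by linarith [neg_abs_le (hW.eigenvalues a)])

lemma posSemidef_matAbs_sub {n : Type} [Fintype n] [DecidableEq n] {W : Matrix n n ℂ}
    (hW : W.IsHermitian) : Matrix.PosSemidef (matAbs W - W) := by
  set U := (hW.eigenvectorUnitary : Matrix n n ℂ) with hUdef
  have hrep : matAbs W - W =
      U * Matrix.diagonal (fun a => ((|hW.eigenvalues a| - hW.eigenvalues a : ℝ) : ℂ)) * star U := by
    have h2 : matAbs W - W =
        U * Matrix.diagonal (fun a => ((|hW.eigenvalues a| : ℝ) : ℂ)) * star U -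
        U * Matrix.diagonal (RCLike.ofReal ∘ hW.eigenvalues) * star U :=
      congrArg₂ (· - ·) (matAbs_spectral hW) hW.spectral_theorem
    rw [h2, show ∀ (A B C D : Matrix n n ℂ), A * B * C - A * D * C = A * (B - D) * C from
      fun A B C D => by noncomm_ring, Matrix.diagonal_sub]
    congr 2
    funext a
    simp [Function.comp]
  rw [hrep]
  exact conj_diag_psd U (fun a => by linarith [le_abs_self (hW.eigenvalues a)])

lemma tensorPos_of_posSemidef {Z : Matrix (∀ i, κ i) (∀ i, κ i) ℂ} (hZ : Z.PosSemidef) :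
    TensorPos Z := fun ψ => hZ.dotProduct_mulVec_nonneg (tvec ψ)

lemma matAbs_isCovering {W : Matrix (∀ i, κ i) (∀ i, κ i) ℂ} (hW : W.IsHermitian) :
    IsCovering W (matAbs W) :=
  ⟨tensorPos_of_posSemidef (by rw [matAbs_spectral hW]; exact conj_diag_psd _ (fun a => abs_nonneg _)),
   tensorPos_of_posSemidef (posSemidef_matAbs_add hW),
   tensorPos_of_posSemidef (posSemidef_matAbs_sub hW)⟩

lemma trace_bound {W C : Matrix (∀ i, κ i) (∀ i, κ i) ℂ} (hcov : IsCovering W C)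
    (X : ∀ i, Matrix (κ i) (κ i) ℂ) (hX : ∀ i, (X i).IsHermitian)
    (hXn : ∀ i, opNorm (X i) = 1) :
    ‖(W * tprod X).trace‖ ≤ (Matrix.trace C).re := by
  set U := tprod (fun i => ((hX i).eigenvectorUnitary : Matrix (κ i) (κ i) ℂ)) with hUdef
  set μ : (∀ i, κ i) → ℂ := fun a => ∏ i, (((hX i).eigenvalues (a i) : ℝ) : ℂ) with hμdef
  have hUU : U * Uᴴ = 1 := by
    rw [hUdef, tprod_conjTranspose, tprod_mul]
    rw [show (fun i => ((hX i).eigenvectorUnitary : Matrix (κ i) (κ i) ℂ) *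
        ((hX i).eigenvectorUnitary : Matrix (κ i) (κ i) ℂ)ᴴ) =
        fun i => (1 : Matrix (κ i) (κ i) ℂ) from funext fun i => by
      rw [← Matrix.star_eq_conjTranspose]
      exact Matrix.mem_unitaryGroup_iff.mp (hX i).eigenvectorUnitary.2]
    exact tprod_one
  have hXrep : tprod X = U * Matrix.diagonal μ * Uᴴ := by
    have h1 : tprod X = tprod (fun i =>
        ((hX i).eigenvectorUnitary : Matrix (κ i) (κ i) ℂ) *
        Matrix.diagonal (RCLike.ofReal ∘ (hX i).eigenvalues) *
        star ((hX i).eigenvectorUnitary : Matrix (κ i) (κ i) ℂ)) :=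
      congrArg tprod (funext fun i => (hX i).spectral_theorem)
    have hD : tprod (κ := κ) (fun i => Matrix.diagonal (RCLike.ofReal ∘ (hX i).eigenvalues)) =
        Matrix.diagonal μ := by
      rw [tprod_diagonal, hμdef]
      rfl
    rw [h1, hUdef, ← hD]
    rw [tprod_conjTranspose, tprod_mul, tprod_mul]
    congr 1
  have htr : (W * tprod X).trace = ∑ a, (Uᴴ * W * U) a a * μ a := by
    rw [hXrep, show W * (U * Matrix.diagonal μ * Uᴴ) = (W * U * Matrix.diagonal μ) * Uᴴ from by
      noncomm_ring, Matrix.trace_mul_comm, show Uᴴ * (W * U * Matrix.diagonal μ) =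
      (Uᴴ * W * U) * Matrix.diagonal μ from by noncomm_ring]
    simp [Matrix.trace, Matrix.diag, Matrix.mul_diagonal]
  have habs : ∀ a, ‖(Uᴴ * W * U) a a‖ ≤ ((Uᴴ * C * U) a a).re := by
    intro a
    rw [column_quad, column_quad]
    exact quad_bound hcov (fun i b => ((hX i).eigenvectorUnitary : Matrix (κ i) (κ i) ℂ) b (a i))
  have hμ1 : ∀ a, ‖μ a‖ ≤ 1 := by
    intro a
    rw [hμdef]
    rw [norm_prod]
    apply Finset.prod_le_one (fun i _ => norm_nonneg _)
    intro i _
    rw [Complex.norm_real, Real.norm_eq_abs]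
    rw [← hXn i]
    exact abs_eigenvalue_le (hX i) (a i)
  have hre : (Matrix.trace C).re = ∑ a, ((Uᴴ * C * U) a a).re := by
    have h1 : Matrix.trace C = Matrix.trace (Uᴴ * C * U) := by
      rw [Matrix.trace_mul_cycle, hUU, Matrix.one_mul]
    rw [h1, Matrix.trace]
    exact Complex.re_sum _ _
  rw [htr, hre]
  calc ‖∑ a, (Uᴴ * W * U) a a * μ a‖
      ≤ ∑ a, ‖(Uᴴ * W * U) a a * μ a‖ := norm_sum_le _ _
    _ ≤ ∑ a, ((Uᴴ * C * U) a a).re := by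
        apply Finset.sum_le_sum
        intro a _
        rw [norm_mul]
        calc ‖(Uᴴ * W * U) a a‖ * ‖μ a‖
            ≤ ((Uᴴ * C * U) a a).re * 1 :=
              mul_le_mul (habs a) (hμ1 a) (norm_nonneg _)
                ((norm_nonneg _).trans (habs a))
          _ = _ := mul_one _

end Aux
end LqHV

open LqHV in
/-- **Lemma 1, property (1).** For every Hermitian matrix `W` on `ℂ^{k₁} ⊗ ⋯ ⊗ ℂ^{k_m}`:
`|tr W| ≤ sup{|tr[W (X₁⊗⋯⊗X_m)]| : X_j Hermitian, ‖X_j‖ = 1} ≤ ‖W‖_cov ≤ ‖W‖₁`. -/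
theorem abs_trace_le_sup_le_covNorm_le_traceNorm {m : ℕ} {k : Fin m → ℕ}
    (W : Matrix (∀ i, Fin (k i)) (∀ i, Fin (k i)) ℂ) (hW : W.IsHermitian) :
    ‖W.trace‖ ≤
        sSup {r : ℝ | ∃ X : ∀ i, Matrix (Fin (k i)) (Fin (k i)) ℂ,
          (∀ i, (X i).IsHermitian) ∧ (∀ i, opNorm (X i) = 1) ∧
          r = ‖(W * tprod X).trace‖} ∧
      sSup {r : ℝ | ∃ X : ∀ i, Matrix (Fin (k i)) (Fin (k i)) ℂ,
          (∀ i, (X i).IsHermitian) ∧ (∀ i, opNorm (X i) = 1) ∧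
          r = ‖(W * tprod X).trace‖} ≤ covNorm W ∧
      covNorm W ≤ traceNorm W := by
  have hcovAbs : IsCovering W (matAbs W) := matAbs_isCovering hW
  have hne : ((fun C => (Matrix.trace C).re) '' {C | IsCovering W C}).Nonempty :=
    ⟨(Matrix.trace (matAbs W)).re, ⟨matAbs W, hcovAbs, rfl⟩⟩
  have hlb : ∀ t ∈ (fun C => (Matrix.trace C).re) '' {C | IsCovering W C}, (0:ℝ) ≤ t := by
    rintro t ⟨C, hC, rfl⟩
    exact trace_re_nonneg hC.1
  have hcov_nonneg : (0:ℝ) ≤ covNorm W := le_csInf hne hlb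
  have helem : ∀ r ∈ {r : ℝ | ∃ X : ∀ i, Matrix (Fin (k i)) (Fin (k i)) ℂ,
      (∀ i, (X i).IsHermitian) ∧ (∀ i, opNorm (X i) = 1) ∧
      r = ‖(W * tprod X).trace‖}, r ≤ covNorm W := by
    rintro r ⟨X, hXh, hXn, rfl⟩
    apply le_csInf hne
    rintro t ⟨C, hC, rfl⟩
    exact trace_bound hC X hXh hXn
  refine ⟨?_, Real.sSup_le helem hcov_nonneg, csInf_le ⟨0, hlb⟩ ⟨matAbs W, hcovAbs, rfl⟩⟩
  by_cases hk : ∀ i, 0 < k i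
  · haveI : ∀ i, Nonempty (Fin (k i)) := fun i => ⟨⟨0, hk i⟩⟩
    have hmem : ‖W.trace‖ ∈ {r : ℝ | ∃ X : ∀ i, Matrix (Fin (k i)) (Fin (k i)) ℂ,
        (∀ i, (X i).IsHermitian) ∧ (∀ i, opNorm (X i) = 1) ∧
        r = ‖(W * tprod X).trace‖} :=
      ⟨fun _ => 1, fun _ => Matrix.isHermitian_one, fun _ => opNorm_one, by
        rw [LqHV.tprod_one, mul_one]⟩
    exact le_csSup ⟨covNorm W, helem⟩ hmem
  · push_neg at hk
    obtain ⟨i0, hi0⟩ := hk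
    haveI : IsEmpty (∀ i, Fin (k i)) :=
      ⟨fun f => absurd (f i0).2 (by omega)⟩
    have htr0 : W.trace = 0 := by
      rw [Matrix.trace, Finset.univ_eq_empty, Finset.sum_empty]
    rw [htr0, norm_zero]
    exact Real.sSup_nonneg (fun r hr => by
      obtain ⟨X, _, _, rfl⟩ := hr
      exact norm_nonneg _)
end

section
/- For every state ρ on ℂ^{d₁}⊗⋯⊗ℂ^{d_N}, all positive integers S₁,…,S_N ≥ 1, and every choice of POVMs M_n^{(s_n)} on ℂ^{d_n} with finite outcome sets Λ_n (s_n = 1,…,S_n, n = 1,…,N), the quantum S₁×⋯×S_N-setting correlation scenario on ρ admits an LqHV (local quasi hidden variable) model. -/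
open scoped ComplexOrder Matrix
open MeasureTheory ProbabilityTheory

namespace LqHV

variable {N : ℕ}

/-- In the tensor product space `⊗_n (ℂ^{d n})^{⊗ S n}`, the operator that acts as `X n` in
slot `k n` of site `n` and as the identity elsewhere. -/
def slot {d S : Fin N → ℕ} (X : ∀ n, Matrix (Fin (d n)) (Fin (d n)) ℂ) (k : ∀ n, Fin (S n)) :
    ∀ p : Σ n : Fin N, Fin (S n), Matrix (Fin (d p.1)) (Fin (d p.1)) ℂ :=
  fun p => if p.2 = k p.1 then X p.1 else 1

/-- `T` is an `S₁ × ⋯ × S_N`-setting source operator for the state `ρ`. -/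
def IsSourceOp (d S : Fin N → ℕ) (ρ : Matrix (∀ n, Fin (d n)) (∀ n, Fin (d n)) ℂ)
    (T : Matrix (∀ p : Σ n : Fin N, Fin (S n), Fin (d p.1))
          (∀ p : Σ n : Fin N, Fin (S n), Fin (d p.1)) ℂ) : Prop :=
  T.IsHermitian ∧
    ∀ (X : ∀ n, Matrix (Fin (d n)) (Fin (d n)) ℂ) (k : ∀ n, Fin (S n)),
      (T * tprod (slot X k)).trace = (ρ * tprod X).trace

/-- A POVM with finite outcome set. -/
def IsPOVM {d : ℕ} {Λ : Type} [Fintype Λ] (M : Λ → Matrix (Fin d) (Fin d) ℂ) : Prop :=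
  (∀ l, (M l).PosSemidef) ∧ ∑ l, M l = 1

/-- Joint probability distributions of a quantum correlation scenario. -/
noncomputable def quantumP {d S : Fin N → ℕ} {Λ : Fin N → Type} [∀ n, Fintype (Λ n)]
    (ρ : Matrix (∀ n, Fin (d n)) (∀ n, Fin (d n)) ℂ)
    (M : ∀ n, Fin (S n) → Λ n → Matrix (Fin (d n)) (Fin (d n)) ℂ)
    (s : ∀ n, Fin (S n)) (lam : ∀ n, Λ n) : ℝ :=
  ((ρ * tprod (fun n => M n (s n) (lam n))).trace).re

/-- A real-valued (signed) measure on the finite set `∏_n Λ_n^{S n}` is normalized. -/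
def Normalized {S : Fin N → ℕ} {Λ : Fin N → Type} [∀ n, Fintype (Λ n)] [∀ n, DecidableEq (Λ n)]
    (μ : (∀ n, Fin (S n) → Λ n) → ℝ) : Prop :=
  ∑ ω, μ ω = 1

/-- `μ` returns all joint distributions `P` of the scenario as the corresponding marginals. -/
def ReturnsMarginals {S : Fin N → ℕ} {Λ : Fin N → Type} [∀ n, Fintype (Λ n)]
    [∀ n, DecidableEq (Λ n)]
    (μ : (∀ n, Fin (S n) → Λ n) → ℝ) (P : (∀ n, Fin (S n)) → (∀ n, Λ n) → ℝ) : Prop :=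
  ∀ (s : ∀ n, Fin (S n)) (lam : ∀ n, Λ n),
    (∑ ω : ∀ n, Fin (S n) → Λ n, if (fun n => ω n (s n)) = lam then μ ω else 0) = P s lam

/-- The total variation norm of a real-valued measure on a finite set. -/
noncomputable def varNorm {S : Fin N → ℕ} {Λ : Fin N → Type} [∀ n, Fintype (Λ n)]
    [∀ n, DecidableEq (Λ n)] (μ : (∀ n, Fin (S n) → Λ n) → ℝ) : ℝ :=
  ∑ ω, |μ ω|

/-- The parameter `γ_E`: the infimum of the total variation norms over all normalized
real-valued measures returning all joint distributions of the scenario as marginals. -/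
noncomputable def gammaE {S : Fin N → ℕ} {Λ : Fin N → Type} [∀ n, Fintype (Λ n)]
    [∀ n, DecidableEq (Λ n)] (P : (∀ n, Fin (S n)) → (∀ n, Λ n) → ℝ) : ℝ :=
  sInf {t | ∃ μ, Normalized μ ∧ ReturnsMarginals μ P ∧ t = varNorm μ}

/-- Integration of a bounded function with respect to a signed measure, via the Jordan
decomposition. -/
noncomputable def signedIntegral {Ω : Type} [MeasurableSpace Ω] (ν : SignedMeasure Ω)
    (f : Ω → ℝ) : ℝ :=
  (∫ ω, f ω ∂ν.toJordanDecomposition.posPart) - ∫ ω, f ω ∂ν.toJordanDecomposition.negPart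

/-- An `S₁ × ⋯ × S_N`-setting correlation scenario with finite outcome sets admits an LHV
(local hidden variable) model. -/
def AdmitsLHVFin {S : Fin N → ℕ} {Λ : Fin N → Type} [∀ n, Fintype (Λ n)]
    (P : (∀ n, Fin (S n)) → (∀ n, Λ n) → ℝ) : Prop :=
  ∃ (Ω : Type) (_ : MeasurableSpace Ω) (ν : Measure Ω) (_ : IsProbabilityMeasure ν)
    (p : ∀ n, Fin (S n) → Ω → Λ n → ℝ),
    (∀ n s ω l, 0 ≤ p n s ω l) ∧ (∀ n s ω, ∑ l, p n s ω l = 1) ∧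
    (∀ n s l, Measurable fun ω => p n s ω l) ∧
    ∀ (s : ∀ n, Fin (S n)) (lam : ∀ n, Λ n),
      P s lam = ∫ ω, ∏ n, p n (s n) ω (lam n) ∂ν

/-- An `S₁ × ⋯ × S_N`-setting correlation scenario with finite outcome sets admits an LqHV
(local quasi hidden variable) model. -/
def AdmitsLqHVFin {S : Fin N → ℕ} {Λ : Fin N → Type} [∀ n, Fintype (Λ n)]
    (P : (∀ n, Fin (S n)) → (∀ n, Λ n) → ℝ) : Prop :=
  ∃ (Ω : Type) (_ : MeasurableSpace Ω) (ν : SignedMeasure Ω)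
    (p : ∀ n, Fin (S n) → Ω → Λ n → ℝ),
    ν Set.univ = 1 ∧
    (∀ n s ω l, 0 ≤ p n s ω l) ∧ (∀ n s ω, ∑ l, p n s ω l = 1) ∧
    (∀ n s l, Measurable fun ω => p n s ω l) ∧
    ∀ (s : ∀ n, Fin (S n)) (lam : ∀ n, Λ n),
      P s lam = signedIntegral ν fun ω => ∏ n, p n (s n) ω (lam n)

end LqHV

section AuxLqHV

open LqHV

private lemma auxCardNe (D : Type) [Fintype D] [DecidableEq D] (j0 : D) :
    Fintype.card {j : D // j ≠ j0} = Fintype.card D - 1 := by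
  simpa using Fintype.card_subtype_compl (fun j : D => j = j0)

private lemma auxSumFunEval {D Λ V : Type} [Fintype D] [DecidableEq D] [Fintype Λ]
    [AddCommMonoid V] (h : Λ → V) (j0 : D) :
    ∑ g : D → Λ, h (g j0) = (Fintype.card Λ ^ (Fintype.card D - 1)) • ∑ m, h m := by
  rw [← Equiv.sum_comp (Equiv.piSplitAt j0 fun _ => Λ).symm (fun g => h (g j0))]
  simp [Fintype.sum_prod_type, Equiv.piSplitAt_symm_apply, Finset.sum_comm,
    Finset.sum_const, Fintype.card_fun, auxCardNe, Finset.smul_sum]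

private lemma auxSumFunEval₂ {D Λ V : Type} [Fintype D] [DecidableEq D] [Fintype Λ]
    [AddCommMonoid V] (h : Λ → Λ → V) (i j : D) (hij : j ≠ i) :
    ∑ g : D → Λ, h (g i) (g j) =
      (Fintype.card Λ ^ (Fintype.card D - 2)) • ∑ a, ∑ b, h a b := by
  rw [← Equiv.sum_comp (Equiv.piSplitAt i fun _ => Λ).symm (fun g => h (g i) (g j))]
  simp only [Fintype.sum_prod_type, Equiv.piSplitAt_symm_apply, dif_pos rfl, dif_neg hij]
  have key : ∀ a : Λ, ∑ g : {k : D // k ≠ i} → Λ, h a (g ⟨j, hij⟩)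
      = (Fintype.card Λ ^ (Fintype.card D - 2)) • ∑ b, h a b := by
    intro a
    rw [auxSumFunEval (fun b => h a b) (⟨j, hij⟩ : {k : D // k ≠ i})]
    rw [auxCardNe, Nat.sub_sub]
  calc ∑ a : Λ, ∑ g : {k : D // k ≠ i} → Λ, h a (g ⟨j, hij⟩)
      = ∑ a : Λ, (Fintype.card Λ ^ (Fintype.card D - 2)) • ∑ b, h a b :=
        Finset.sum_congr rfl fun a _ => key a
    _ = _ := by rw [← Finset.smul_sum]

/-- The one-site quasi joint POVM-like family. -/
private noncomputable def siteK {S dd : ℕ} {Λ : Type} [Fintype Λ]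
    (M : Fin S → Λ → Matrix (Fin dd) (Fin dd) ℂ) (f : Fin S → Λ) :
    Matrix (Fin dd) (Fin dd) ℂ :=
  (((Fintype.card Λ : ℂ)⁻¹ ^ (S - 1)) • ∑ s, M s (f s))
    + (-(((S : ℂ) - 1) * (Fintype.card Λ : ℂ)⁻¹ ^ S)) • 1

private lemma siteK_marginal {S dd : ℕ} {Λ : Type} [Fintype Λ] [DecidableEq Λ] [Nonempty Λ]
    (M : Fin S → Λ → Matrix (Fin dd) (Fin dd) ℂ) (hM : ∀ s, ∑ l, M s l = 1)
    (s0 : Fin S) (l : Λ) :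
    ∑ f : Fin S → Λ, (if f s0 = l then (1:ℂ) else 0) • siteK M f = M s0 l := by
  obtain ⟨S', rfl⟩ : ∃ S', S = S' + 1 := ⟨S - 1, by have := s0.pos; omega⟩
  set L : ℂ := (Fintype.card Λ : ℂ) with hLdef
  have hL : L ≠ 0 := by
    simp [hLdef, Fintype.card_ne_zero]
  set c : ℂ := L⁻¹ ^ (S' + 1 - 1) with hc
  set e : ℂ := -(((S' + 1 : ℕ) : ℂ) - 1) * L⁻¹ ^ (S' + 1) with he
  have hB0 : ∑ f : Fin (S' + 1) → Λ, (if f s0 = l then (1:ℂ) else 0) • M s0 (f s0)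
      = (Fintype.card Λ ^ S' : ℕ) • M s0 l := by
    rw [auxSumFunEval (fun m => (if m = l then (1:ℂ) else 0) • M s0 m) s0]
    simp [Fintype.card_fin]
  have hBs : ∀ s : Fin (S' + 1), s ≠ s0 →
      ∑ f : Fin (S' + 1) → Λ, (if f s0 = l then (1:ℂ) else 0) • M s (f s)
      = (Fintype.card Λ ^ (S' - 1) : ℕ) • (1 : Matrix (Fin dd) (Fin dd) ℂ) := by
    intro s hs
    rw [auxSumFunEval₂ (fun a b => (if a = l then (1:ℂ) else 0) • M s b) s0 s hs]
    simp [Fintype.card_fin, hM s]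
  have hcount : ∑ f : Fin (S' + 1) → Λ, (if f s0 = l then (1:ℂ) else 0)
      = ((Fintype.card Λ ^ S' : ℕ) : ℂ) := by
    rw [auxSumFunEval (fun m => (if m = l then (1:ℂ) else 0)) s0]
    simp [Fintype.card_fin]
  have expand : ∑ f : Fin (S' + 1) → Λ, (if f s0 = l then (1:ℂ) else 0) • siteK M f
      = c • (∑ s : Fin (S' + 1), ∑ f : Fin (S' + 1) → Λ,
              (if f s0 = l then (1:ℂ) else 0) • M s (f s))
        + (((Fintype.card Λ ^ S' : ℕ) : ℂ) * e) • 1 := by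
    have h1 : ∀ f : Fin (S' + 1) → Λ, (if f s0 = l then (1:ℂ) else 0) • siteK M f
        = c • ∑ s, (if f s0 = l then (1:ℂ) else 0) • M s (f s)
          + ((if f s0 = l then (1:ℂ) else 0) * e) • 1 := by
      intro f
      rw [siteK, smul_add, smul_comm _ c, smul_smul, Finset.smul_sum]
      simp [Finset.smul_sum, smul_smul, he, hLdef]
    calc ∑ f : Fin (S' + 1) → Λ, (if f s0 = l then (1:ℂ) else 0) • siteK M f
        = ∑ f : Fin (S' + 1) → Λ, (c • ∑ s, (if f s0 = l then (1:ℂ) else 0) • M s (f s)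
            + ((if f s0 = l then (1:ℂ) else 0) * e) • 1) :=
          Finset.sum_congr rfl fun f _ => h1 f
      _ = _ := by
          rw [Finset.sum_add_distrib, ← Finset.smul_sum, ← Finset.sum_smul,
            ← Finset.sum_mul, Finset.sum_comm, hcount]
  rw [expand]
  rw [Finset.sum_eq_sum_sdiff_singleton_add (Finset.mem_univ s0)]
  have hdiff : ∑ s ∈ Finset.univ \ {s0}, ∑ f : Fin (S' + 1) → Λ,
      (if f s0 = l then (1:ℂ) else 0) • M s (f s)
      = S' • ((Fintype.card Λ ^ (S' - 1) : ℕ) • (1 : Matrix (Fin dd) (Fin dd) ℂ)) := by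
    rw [Finset.sum_congr rfl (fun s hs => hBs s (by
      rcases Finset.mem_sdiff.mp hs with ⟨_, h⟩
      simpa using h))]
    rw [Finset.sum_const, Finset.card_univ_diff]
    simp
  rw [hdiff, hB0]
  have cast1 : ∀ (k : ℕ) (X : Matrix (Fin dd) (Fin dd) ℂ), k • X = ((k : ℂ)) • X :=
    fun k X => (Nat.cast_smul_eq_nsmul ℂ k X).symm
  rw [cast1, cast1, cast1, smul_smul, smul_add, smul_smul, smul_smul]
  have hα : c * ((Fintype.card Λ ^ S' : ℕ) : ℂ) = 1 := by
    have hx : ((Fintype.card Λ ^ S' : ℕ) : ℂ) = L ^ S' := by push_cast [hLdef]; ring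
    rw [hc, hx]
    simp only [Nat.add_sub_cancel]
    rw [← mul_pow, inv_mul_cancel₀ hL, one_pow]
  have hβ : c * ((S' : ℂ) * ((Fintype.card Λ ^ (S' - 1) : ℕ) : ℂ))
      + ((Fintype.card Λ ^ S' : ℕ) : ℂ) * e = 0 := by
    have hcast : ∀ k : ℕ, ((Fintype.card Λ ^ k : ℕ) : ℂ) = L ^ k := by
      intro k; push_cast [hLdef]; ring
    rcases S' with _ | S''
    · simp [hc, he, hcast]
    · rw [hc, he, hcast, hcast]
      simp only [Nat.add_sub_cancel]
      push_cast
      field_simp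
      have hLL : L * L⁻¹ = 1 := mul_inv_cancel₀ hL
      linear_combination (-(1 + (S'' : ℂ)) * L ^ S'' * L⁻¹ ^ (S'' + 1)) * hLL
  rw [hα, one_smul, add_right_comm, ← add_smul, hβ, zero_smul, zero_add]

private lemma siteK_sum {S dd : ℕ} {Λ : Type} [Fintype Λ] [DecidableEq Λ] [Nonempty Λ]
    (M : Fin S → Λ → Matrix (Fin dd) (Fin dd) ℂ) (hM : ∀ s, ∑ l, M s l = 1) (hS : 0 < S) :
    ∑ f : Fin S → Λ, siteK M f = 1 := by
  have s0 : Fin S := ⟨0, hS⟩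
  calc ∑ f : Fin S → Λ, siteK M f
      = ∑ f : Fin S → Λ, ∑ l, (if f s0 = l then (1:ℂ) else 0) • siteK M f := by
        refine Finset.sum_congr rfl fun f _ => ?_
        rw [← Finset.sum_smul]
        simp
    _ = ∑ l, ∑ f : Fin S → Λ, (if f s0 = l then (1:ℂ) else 0) • siteK M f :=
        Finset.sum_comm
    _ = ∑ l, M s0 l := Finset.sum_congr rfl fun l _ => siteK_marginal M hM s0 l
    _ = 1 := hM s0

section TprodLemmas

variable {N : ℕ} {d S : Fin N → ℕ} {Λ : Fin N → Type} [∀ n, Fintype (Λ n)]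
  [∀ n, DecidableEq (Λ n)]

private lemma auxSumTprod (K : ∀ n, (Fin (S n) → Λ n) → Matrix (Fin (d n)) (Fin (d n)) ℂ) :
    ∑ ω : ∀ n, Fin (S n) → Λ n, LqHV.tprod (fun n => K n (ω n))
      = LqHV.tprod (fun n => ∑ f : Fin (S n) → Λ n, K n f) := by
  funext a b
  rw [Matrix.sum_apply]
  simp only [LqHV.tprod, Matrix.sum_apply]
  rw [Finset.prod_univ_sum, Fintype.piFinset_univ]

private lemma auxSumIndTprod
    (K : ∀ n, (Fin (S n) → Λ n) → Matrix (Fin (d n)) (Fin (d n)) ℂ)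
    (s : ∀ n, Fin (S n)) (lam : ∀ n, Λ n) :
    ∑ ω : ∀ n, Fin (S n) → Λ n,
      (if (fun n => ω n (s n)) = lam then (1:ℂ) else 0) • LqHV.tprod (fun n => K n (ω n))
      = LqHV.tprod (fun n => ∑ f : Fin (S n) → Λ n,
          (if f (s n) = lam n then (1:ℂ) else 0) • K n f) := by
  funext a b
  rw [Matrix.sum_apply]
  simp only [LqHV.tprod, Matrix.smul_apply, Matrix.sum_apply, smul_eq_mul]
  rw [Finset.prod_univ_sum, Fintype.piFinset_univ]
  refine Finset.sum_congr rfl fun ω _ => ?_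
  rw [Finset.prod_mul_distrib, Finset.prod_boole]
  congr 1
  simp [funext_iff]

private lemma auxTprodOne :
    LqHV.tprod (fun n => (1 : Matrix (Fin (d n)) (Fin (d n)) ℂ)) = 1 := by
  funext a b
  simp only [LqHV.tprod, Matrix.one_apply, Finset.prod_boole]
  simp [funext_iff]

end TprodLemmas

private lemma auxExistsSignedMeasure {Ω : Type} [Fintype Ω] (μ : Ω → ℝ) :
    ∃ (m : MeasurableSpace Ω) (ν : @MeasureTheory.SignedMeasure Ω m),
      (∀ {β : Type} [MeasurableSpace β] (f : Ω → β), @Measurable Ω β m _ f) ∧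
      ν Set.univ = ∑ ω, μ ω ∧
      ∀ f : Ω → ℝ, @LqHV.signedIntegral Ω m ν f = ∑ ω, μ ω * f ω := by
  classical
  letI m : MeasurableSpace Ω := ⊤
  haveI : MeasurableSingletonClass Ω := ⟨fun _ => trivial⟩
  set Pp : Measure Ω := ∑ ω : Ω, ENNReal.ofReal (μ ω) • Measure.dirac ω with hPp
  set Pn : Measure Ω := ∑ ω : Ω, ENNReal.ofReal (-μ ω) • Measure.dirac ω with hPn
  have happly : ∀ (g : Ω → ℝ) (t : Set Ω),
      (∑ ω : Ω, ENNReal.ofReal (g ω) • Measure.dirac ω) t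
        = ∑ ω : Ω, ENNReal.ofReal (g ω) * (if ω ∈ t then 1 else 0) := by
    intro g t
    rw [Measure.finset_sum_apply]
    refine Finset.sum_congr rfl fun ω _ => ?_
    rw [Measure.smul_apply, Measure.dirac_apply, smul_eq_mul]
    simp [Set.indicator]
  haveI hfinp : IsFiniteMeasure Pp := by
    constructor
    rw [hPp, happly]
    exact ENNReal.sum_lt_top.mpr fun ω _ => by
      exact ENNReal.mul_lt_top ENNReal.ofReal_lt_top (by split <;> simp)
  haveI hfinn : IsFiniteMeasure Pn := by
    constructor
    rw [hPn, happly]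
    exact ENNReal.sum_lt_top.mpr fun ω _ => by
      exact ENNReal.mul_lt_top ENNReal.ofReal_lt_top (by split <;> simp)
  have hms : Pp ⟂ₘ Pn := by
    refine ⟨{ω | μ ω < 0}, trivial, ?_, ?_⟩
    · rw [hPp, happly]
      refine Finset.sum_eq_zero fun ω _ => ?_
      by_cases h : μ ω < 0
      · simp [ENNReal.ofReal_eq_zero.mpr (le_of_lt h)]
      · simp [h]
    · rw [hPn, happly]
      refine Finset.sum_eq_zero fun ω _ => ?_
      by_cases h : μ ω < 0
      · simp [h]
      · simp [ENNReal.ofReal_eq_zero.mpr (neg_nonpos.mpr (not_lt.mp h))]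
  set j : MeasureTheory.JordanDecomposition Ω :=
    { posPart := Pp, negPart := Pn, mutuallySingular := hms } with hj
  refine ⟨m, j.toSignedMeasure, fun f => measurable_from_top, ?_, ?_⟩
  · rw [MeasureTheory.JordanDecomposition.toSignedMeasure,
      Measure.toSignedMeasure_sub_apply MeasurableSet.univ]
    show (Pp Set.univ).toReal - (Pn Set.univ).toReal = _
    rw [hPp, hPn, happly, happly]
    rw [ENNReal.toReal_sum (fun ω _ => by
        exact (ENNReal.mul_lt_top ENNReal.ofReal_lt_top (by split <;> simp)).ne),
      ENNReal.toReal_sum (fun ω _ => by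
        exact (ENNReal.mul_lt_top ENNReal.ofReal_lt_top (by split <;> simp)).ne),
      ← Finset.sum_sub_distrib]
    refine Finset.sum_congr rfl fun ω _ => ?_
    simp [ENNReal.toReal_ofReal', max_zero_sub_max_neg_zero_eq_self]
  · intro f
    rw [LqHV.signedIntegral,
      MeasureTheory.JordanDecomposition.toJordanDecomposition_toSignedMeasure]
    show (∫ ω, f ω ∂Pp) - (∫ ω, f ω ∂Pn) = _
    have hint : ∀ g : Ω → ℝ,
        (∫ ω, f ω ∂(∑ ω : Ω, ENNReal.ofReal (g ω) • Measure.dirac ω))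
          = ∑ ω : Ω, max (g ω) 0 * f ω := by
      intro g
      rw [integral_finset_sum_measure (fun ω _ => by
        haveI : IsFiniteMeasure (ENNReal.ofReal (g ω) • Measure.dirac ω) := by
          constructor
          rw [Measure.smul_apply, smul_eq_mul]
          exact ENNReal.mul_lt_top ENNReal.ofReal_lt_top (by simp)
        exact MeasureTheory.Integrable.of_finite)]
      refine Finset.sum_congr rfl fun ω _ => ?_
      rw [integral_smul_measure, integral_dirac, ENNReal.toReal_ofReal', smul_eq_mul]
    rw [hPp, hPn, hint, hint, ← Finset.sum_sub_distrib]
    refine Finset.sum_congr rfl fun ω _ => ?_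
    rw [← sub_mul, max_zero_sub_max_neg_zero_eq_self]

end AuxLqHV


open LqHV in
/-- **Theorem 2.** For every state `ρ` on `ℂ^{d₁} ⊗ ⋯ ⊗ ℂ^{d_N}`, all positive integers
`S₁, …, S_N ≥ 1` and every choice of POVMs `M n s` on `ℂ^{d n}` with finite outcome sets
`Λ n`, the quantum `S₁ × ⋯ × S_N`-setting correlation scenario on `ρ` admits an LqHV model. -/
theorem quantum_scenario_admits_LqHV {N : ℕ} (d S : Fin N → ℕ) (hS : ∀ n, 1 ≤ S n)
    {Λ : Fin N → Type} [∀ n, Fintype (Λ n)] [∀ n, DecidableEq (Λ n)]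
    (ρ : Matrix (∀ n, Fin (d n)) (∀ n, Fin (d n)) ℂ)
    (hρ : ρ.PosSemidef) (hρtr : ρ.trace = 1)
    (M : ∀ n, Fin (S n) → Λ n → Matrix (Fin (d n)) (Fin (d n)) ℂ)
    (hM : ∀ n s, IsPOVM (M n s)) :
    AdmitsLqHVFin (quantumP ρ M) := by
  classical
  have hNE : ∀ n, Nonempty (Λ n) := by
    intro n
    by_contra h
    rw [not_nonempty_iff] at h
    have h1 := (hM n ⟨0, hS n⟩).2
    rw [Finset.univ_eq_empty, Finset.sum_empty] at h1
    rcases Nat.eq_zero_or_pos (d n) with hd | hd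
    · haveI : IsEmpty (∀ m, Fin (d m)) := ⟨fun g => absurd (g n).isLt (by omega)⟩
      rw [Matrix.trace, Finset.univ_eq_empty, Finset.sum_empty] at hρtr
      exact one_ne_zero hρtr.symm
    · have h2 := congrFun (congrFun h1 ⟨0, hd⟩) ⟨0, hd⟩
      simp [Matrix.one_apply] at h2
  haveI := hNE
  set K : ∀ n, (Fin (S n) → Λ n) → Matrix (Fin (d n)) (Fin (d n)) ℂ :=
    fun n => siteK (M n) with hK
  set μ : (∀ n, Fin (S n) → Λ n) → ℝ :=
    fun ω => ((ρ * tprod (fun n => K n (ω n))).trace).re with hμ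
  have hKmarg : ∀ n (s0 : Fin (S n)) (l : Λ n),
      ∑ f : Fin (S n) → Λ n, (if f s0 = l then (1:ℂ) else 0) • K n f = M n s0 l :=
    fun n s0 l => siteK_marginal (M n) (fun s => (hM n s).2) s0 l
  have hnorm : ∑ ω, μ ω = 1 := by
    have hts : (∑ ω : ∀ n, Fin (S n) → Λ n, (ρ * tprod fun n => K n (ω n)).trace) = 1 := by
      rw [← Matrix.trace_sum, ← Finset.mul_sum, auxSumTprod]
      have h1 : (fun n => ∑ f : Fin (S n) → Λ n, K n f)
          = fun n => (1 : Matrix (Fin (d n)) (Fin (d n)) ℂ) := by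
        funext n
        exact siteK_sum (M n) (fun s => (hM n s).2) (Nat.lt_of_lt_of_le Nat.zero_lt_one (hS n))
      rw [h1, auxTprodOne, mul_one, hρtr]
    calc ∑ ω, μ ω
        = (∑ ω : ∀ n, Fin (S n) → Λ n, (ρ * tprod fun n => K n (ω n)).trace).re := by
          rw [Complex.re_sum]
      _ = 1 := by rw [hts]; norm_num
  have hmarg : ∀ (s : ∀ n, Fin (S n)) (lam : ∀ n, Λ n),
      (∑ ω : ∀ n, Fin (S n) → Λ n, if (fun n => ω n (s n)) = lam then μ ω else 0)
        = quantumP ρ M s lam := by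
    intro s lam
    have hmx : ∑ ω : ∀ n, Fin (S n) → Λ n,
        (if (fun n => ω n (s n)) = lam then (1:ℂ) else 0) • tprod (fun n => K n (ω n))
        = tprod (fun n => M n (s n) (lam n)) := by
      rw [auxSumIndTprod]
      exact congrArg LqHV.tprod (funext fun n => hKmarg n (s n) (lam n))
    have htr : ∑ ω : ∀ n, Fin (S n) → Λ n,
        (if (fun n => ω n (s n)) = lam then ((ρ * tprod fun n => K n (ω n)).trace) else 0)
        = (ρ * tprod (fun n => M n (s n) (lam n))).trace := by
      calc ∑ ω : ∀ n, Fin (S n) → Λ n,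
            (if (fun n => ω n (s n)) = lam then ((ρ * tprod fun n => K n (ω n)).trace) else 0)
          = ∑ ω : ∀ n, Fin (S n) → Λ n,
            (ρ * ((if (fun n => ω n (s n)) = lam then (1:ℂ) else 0)
                • tprod (fun n => K n (ω n)))).trace := by
            refine Finset.sum_congr rfl fun ω _ => ?_
            split <;> simp
        _ = (ρ * ∑ ω : ∀ n, Fin (S n) → Λ n,
              (if (fun n => ω n (s n)) = lam then (1:ℂ) else 0)
                • tprod (fun n => K n (ω n))).trace := by
            rw [← Matrix.trace_sum, ← Finset.mul_sum]
        _ = _ := by rw [hmx]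
    calc (∑ ω : ∀ n, Fin (S n) → Λ n, if (fun n => ω n (s n)) = lam then μ ω else 0)
        = (∑ ω : ∀ n, Fin (S n) → Λ n,
            if (fun n => ω n (s n)) = lam
              then ((ρ * tprod fun n => K n (ω n)).trace) else 0).re := by
          rw [Complex.re_sum]
          refine Finset.sum_congr rfl fun ω _ => ?_
          split <;> simp [hμ]
      _ = quantumP ρ M s lam := by rw [htr]; rfl
  obtain ⟨m, ν, hmeas, hν1, hint⟩ := auxExistsSignedMeasure μ
  refine ⟨∀ n, Fin (S n) → Λ n, m, ν,
    fun n s ω l => if ω n s = l then 1 else 0, ?_, ?_, ?_, ?_, ?_⟩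
  · rw [hν1, hnorm]
  · intro n s ω l; dsimp only; split <;> norm_num
  · intro n s ω; dsimp only; simp
  · intro n s l; exact hmeas _
  · intro s lam
    rw [hint, ← hmarg s lam]
    refine Finset.sum_congr rfl fun ω _ => ?_
    simp [Finset.prod_boole, funext_iff, mul_ite]
end
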